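/- arXiv:2008.03668 — 4 statements merged into one kernel-verified Lean document; each statement's English description precedes it below -/
import Mathlib

section
/- No continuous linear operator on a finite-dimensional complex normed space of positive dimension is hypercyclic: for every n ≥ 1, every linear operator A on ℂⁿ, and every x₀ ∈ ℂⁿ, the orbit {Aᵏx₀ : k = 0, 1, 2, …} is not dense in ℂⁿ. -/
/-- No linear operator on a finite-dimensional complex space `ℂⁿ` (`n ≥ 1`)
is hypercyclic: for every `x₀`, the orbit `{Aᵏx₀ : k ∈ ℕ}` is not dense. -/
theorem stmt_14 (n : ℕ) (hn : 1 ≤ n)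
    (A : Module.End ℂ (EuclideanSpace ℂ (Fin n))) (x₀ : EuclideanSpace ℂ (Fin n)) :
    ¬ Dense (Set.range fun k : ℕ => (A ^ k) x₀) := by
  intro hd
  have hV : Nontrivial (EuclideanSpace ℂ (Fin n)) := by
    have : 0 < Module.finrank ℂ (EuclideanSpace ℂ (Fin n)) := by simp; omega
    exact Module.nontrivial_of_finrank_pos this
  have hDnt : Nontrivial (Module.Dual ℂ (EuclideanSpace ℂ (Fin n))) := by
    apply Module.nontrivial_of_finrank_pos (R := ℂ)
    rw [Subspace.dual_finrank_eq]
    simp; omega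
  obtain ⟨μ, hμ⟩ := Module.End.exists_eigenvalue (A.dualMap)
  obtain ⟨φ, hφev⟩ := hμ.exists_hasEigenvector
  have hφne : φ ≠ 0 := hφev.2
  have h1 : A.dualMap φ = μ • φ := hφev.apply_eq_smul
  have key : ∀ x, φ (A x) = μ * φ x := by
    intro x
    have := congrFun (congrArg (DFunLike.coe) h1) x
    simpa using this
  have keyk : ∀ (k : ℕ) (x : EuclideanSpace ℂ (Fin n)),
      φ ((A ^ k) x) = μ ^ k * φ x := by
    intro k
    induction k with
    | zero => simp
    | succ k ih =>
      intro x
      rw [pow_succ, Module.End.mul_apply, ih, key, pow_succ]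
      ring
  have hφcont : Continuous φ := φ.continuous_of_finiteDimensional
  have hφsurj : Function.Surjective φ := LinearMap.surjective_of_ne_zero hφne
  have hdr : DenseRange (fun k : ℕ => φ ((A ^ k) x₀)) := by
    have : DenseRange (⇑φ ∘ fun k : ℕ => (A ^ k) x₀) :=
      DenseRange.comp hφsurj.denseRange hd hφcont
    simpa [Function.comp_def] using this
  have hdr' : DenseRange (fun k : ℕ => μ ^ k * φ x₀) := by
    simpa [keyk] using hdr
  set c := φ x₀ with hc_def
  rw [DenseRange, Metric.dense_iff] at hdr'
  by_cases hc : c = 0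
  · obtain ⟨y, hy1, k, hk⟩ := hdr' 1 (1/2) (by norm_num)
    rw [← hk] at hy1
    simp only [Metric.mem_ball] at hy1
    simp only [hc, mul_zero] at hy1
    rw [dist_eq_norm, zero_sub, norm_neg] at hy1
    norm_num at hy1
  · by_cases hμ1 : ‖μ‖ ≤ 1
    · obtain ⟨y, hy1, k, hk⟩ := hdr' ((‖c‖ : ℂ) + 1) (1/2) (by norm_num)
      rw [← hk] at hy1
      simp only [Metric.mem_ball] at hy1
      have hnorm : ‖μ ^ k * c‖ ≤ ‖c‖ := by
        rw [norm_mul, norm_pow]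
        calc ‖μ‖ ^ k * ‖c‖ ≤ 1 * ‖c‖ :=
              mul_le_mul_of_nonneg_right (pow_le_one₀ (norm_nonneg _) hμ1) (norm_nonneg _)
          _ = ‖c‖ := one_mul _
      have hz : ‖((‖c‖ : ℂ) + 1)‖ = ‖c‖ + 1 := by
        rw [← Complex.ofReal_one, ← Complex.ofReal_add, Complex.norm_real,
          Real.norm_eq_abs, abs_of_nonneg (by positivity : (0:ℝ) ≤ ‖c‖ + 1)]
      have hlow : ‖((‖c‖ : ℂ) + 1)‖ - ‖μ ^ k * c‖ ≤ dist (μ ^ k * c) ((‖c‖ : ℂ) + 1) := by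
        rw [dist_comm, dist_eq_norm]
        exact norm_sub_norm_le _ _
      rw [hz] at hlow
      have : (1 : ℝ) ≤ dist (μ ^ k * c) ((‖c‖ : ℂ) + 1) := by linarith
      linarith
    · push_neg at hμ1
      have hcpos : 0 < ‖c‖ := norm_pos_iff.mpr hc
      obtain ⟨y, hy1, k, hk⟩ := hdr' 0 ‖c‖ hcpos
      rw [← hk] at hy1
      simp only [Metric.mem_ball] at hy1
      rw [dist_zero_right, norm_mul, norm_pow] at hy1
      have : (1:ℝ) ^ k * ‖c‖ ≤ ‖μ‖ ^ k * ‖c‖ :=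
        mul_le_mul_of_nonneg_right (pow_le_pow_left₀ (by norm_num) hμ1.le k) (norm_nonneg _)
      rw [one_pow, one_mul] at this
      linarith
end

section
/- (Rolewicz) For every complex scalar α with |α| > 1, the operator αT on ℓ²(ℕ), where T is the left (backward) shift T(x₁, x₂, x₃, …) = (x₂, x₃, …), is hypercyclic: there exists x₀ ∈ ℓ² whose orbit {(αT)ᵏx₀ : k = 0, 1, 2, …} is dense in ℓ². -/
open scoped ENNReal

noncomputable section RolewiczAux
namespace RolewiczAux

abbrev Hsp := lp (fun _ : ℕ => ℂ) 2

lemma ht : (0:ℝ) < ((2:ℝ≥0∞)).toReal := by norm_num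

lemma coord_summable (y : Hsp) :
    Summable (fun i => ‖(y : ℕ → ℂ) i‖ ^ ((2:ℝ≥0∞)).toReal) :=
  (lp.memℓp y).summable ht

/-- the function underlying the `n`-fold right shift -/
def shiftFun (n : ℕ) (y : Hsp) : ℕ → ℂ := fun i => if n ≤ i then y (i - n) else 0

lemma shiftFun_add (n : ℕ) (y : Hsp) (i : ℕ) : shiftFun n y (i + n) = y i := by
  simp [shiftFun]

lemma shiftFun_support (n : ℕ) (y : Hsp) {x : ℕ} (hx : x ∉ Set.range (· + n)) :
    shiftFun n y x = 0 := by
  have : ¬ (n ≤ x) := by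
    intro h
    exact hx ⟨x - n, Nat.sub_add_cancel h⟩
  simp [shiftFun, this]

lemma summable_shiftFun (n : ℕ) (y : Hsp) :
    Summable (fun i => ‖shiftFun n y i‖ ^ ((2:ℝ≥0∞)).toReal) := by
  refine (Function.Injective.summable_iff (add_left_injective n) ?_).mp ?_
  · intro x hx
    simp [shiftFun_support n y hx, Real.zero_rpow ht.ne']
  · have : (fun i => ‖shiftFun n y i‖ ^ ((2:ℝ≥0∞)).toReal) ∘ (· + n)
        = fun i => ‖(y : ℕ → ℂ) i‖ ^ ((2:ℝ≥0∞)).toReal := by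
      funext i; simp [Function.comp, shiftFun_add]
    rw [this]
    exact coord_summable y

/-- the `n`-fold right shift -/
def shiftL (n : ℕ) (y : Hsp) : Hsp := ⟨shiftFun n y, memℓp_gen (summable_shiftFun n y)⟩

lemma shiftL_apply (n : ℕ) (y : Hsp) (i : ℕ) :
    (shiftL n y : ℕ → ℂ) i = if n ≤ i then y (i - n) else 0 := rfl

lemma shiftL_zero (y : Hsp) : shiftL 0 y = y := by
  apply lp.ext
  funext i
  simp [shiftL_apply]

lemma norm_shiftL (n : ℕ) (y : Hsp) : ‖shiftL n y‖ = ‖y‖ := by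
  rw [lp.norm_eq_tsum_rpow ht, lp.norm_eq_tsum_rpow ht]
  congr 1
  rw [← Function.Injective.tsum_eq (g := (· + n)) (add_left_injective n)
    (f := fun i => ‖(shiftL n y : ℕ → ℂ) i‖ ^ ((2:ℝ≥0∞)).toReal) ?_]
  · congr 1
    funext i
    simp [shiftL_apply]
  · intro x hx
    by_cases h : n ≤ x
    · exact ⟨x - n, Nat.sub_add_cancel h⟩
    · exfalso
      apply hx
      simp [shiftL_apply, h, Real.zero_rpow ht.ne']

section Op
variable (T : Hsp →L[ℂ] Hsp)
variable {α : ℂ}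

lemma Tpow_apply (hT : ∀ (x : Hsp) (n : ℕ), (T x) n = x (n + 1)) (m : ℕ) (x : Hsp) (i : ℕ) :
    ((T ^ m) x) i = x (i + m) := by
  induction m generalizing x i with
  | zero => simp
  | succ m ih =>
      rw [pow_succ, ContinuousLinearMap.mul_apply]
      rw [ih (T x) i, hT x (i + m), Nat.add_assoc]

lemma Bpow_apply (hT : ∀ (x : Hsp) (n : ℕ), (T x) n = x (n + 1)) (m : ℕ) (x : Hsp) (i : ℕ) :
    (((α • T) ^ m) x) i = α ^ m * x (i + m) := by
  rw [smul_pow, ContinuousLinearMap.smul_apply, lp.coeFn_smul, Pi.smul_apply,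
    Tpow_apply T hT, smul_eq_mul]

lemma key (hT : ∀ (x : Hsp) (n : ℕ), (T x) n = x (n + 1)) (hα0 : α ≠ 0) (m n : ℕ) (h : m ≤ n) (y : Hsp) :
    ((α • T) ^ m) ((α⁻¹ ^ n) • shiftL n y) = (α⁻¹ ^ (n - m)) • shiftL (n - m) y := by
  apply lp.ext
  funext i
  rw [Bpow_apply T hT]
  rw [lp.coeFn_smul, lp.coeFn_smul, Pi.smul_apply, Pi.smul_apply, smul_eq_mul, smul_eq_mul,
    shiftL_apply, shiftL_apply]
  have hmul : α ^ m * α⁻¹ ^ m = 1 := by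
    rw [← mul_pow, mul_inv_cancel₀ hα0, one_pow]
  by_cases hc : n ≤ i + m
  · have hc' : n - m ≤ i := by omega
    rw [if_pos hc, if_pos hc']
    have h1 : i + m - n = i - (n - m) := by omega
    have h2 : α⁻¹ ^ n = α⁻¹ ^ (n - m) * α⁻¹ ^ m := by
      rw [← pow_add, Nat.sub_add_cancel h]
    rw [h1, h2]
    calc α ^ m * (α⁻¹ ^ (n - m) * α⁻¹ ^ m * (y : ℕ → ℂ) (i - (n - m)))
        = (α ^ m * α⁻¹ ^ m) * (α⁻¹ ^ (n - m) * (y : ℕ → ℂ) (i - (n - m))) := by ring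
      _ = α⁻¹ ^ (n - m) * (y : ℕ → ℂ) (i - (n - m)) := by rw [hmul, one_mul]
  · have hc' : ¬ (n - m ≤ i) := by omega
    rw [if_neg hc, if_neg hc']
    ring

lemma key' (hT : ∀ (x : Hsp) (n : ℕ), (T x) n = x (n + 1)) (hα0 : α ≠ 0) (n : ℕ) (y : Hsp) :
    ((α • T) ^ n) ((α⁻¹ ^ n) • shiftL n y) = y := by
  rw [key T hT hα0 n n le_rfl y, Nat.sub_self, pow_zero, one_smul, shiftL_zero]

lemma kill (hT : ∀ (x : Hsp) (n : ℕ), (T x) n = x (n + 1)) (m N : ℕ) (hNm : N ≤ m) (y : Hsp) (hy : ∀ i, N ≤ i → (y : ℕ → ℂ) i = 0) :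
    ((α • T) ^ m) y = 0 := by
  apply lp.ext
  funext i
  rw [Bpow_apply T hT, hy (i + m) (by omega)]
  simp

end Op

/-- embed a rational pair into ℂ -/
def cc : ℚ × ℚ → ℂ := fun q => (q.1 : ℂ) + (q.2 : ℂ) * Complex.I

lemma cc_near (w : ℂ) {δ : ℝ} (hδ : 0 < δ) : ∃ q : ℚ × ℚ, ‖w - cc q‖ < δ := by
  obtain ⟨q1, hq1⟩ := exists_rat_near w.re (by linarith : (0:ℝ) < δ / 2)
  obtain ⟨q2, hq2⟩ := exists_rat_near w.im (by linarith : (0:ℝ) < δ / 2)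
  refine ⟨(q1, q2), ?_⟩
  have h1 : (w - cc (q1, q2)).re = w.re - q1 := by simp [cc]
  have h2 : (w - cc (q1, q2)).im = w.im - q2 := by simp [cc]
  calc ‖w - cc (q1, q2)‖ ≤ |(w - cc (q1, q2)).re| + |(w - cc (q1, q2)).im| :=
        Complex.norm_le_abs_re_add_abs_im _
    _ < δ := by rw [h1, h2]; linarith

lemma single_sub' (i : ℕ) (a b : ℂ) :
    (lp.single 2 i (a - b) : Hsp) = lp.single 2 i a - lp.single 2 i b := by
  apply lp.ext
  funext j
  rw [lp.coeFn_sub, Pi.sub_apply]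
  rcases eq_or_ne j i with rfl | hji
  · rw [lp.single_apply_self, lp.single_apply_self, lp.single_apply_self]
  · rw [lp.single_apply_ne 2 i _ hji, lp.single_apply_ne 2 i _ hji,
      lp.single_apply_ne 2 i _ hji, sub_zero]

/-- finitely supported element of `ℓ²` coded by a list of rational pairs -/
def elt (l : List (ℚ × ℚ)) : Hsp :=
  ∑ i ∈ Finset.range l.length, lp.single 2 i (cc (l.getD i (0, 0)))

lemma elt_apply_ge (l : List (ℚ × ℚ)) {i : ℕ} (h : l.length ≤ i) :
    (elt l : ℕ → ℂ) i = 0 := by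
  rw [elt, lp.coeFn_sum, Finset.sum_apply]
  refine Finset.sum_eq_zero fun j hj => ?_
  rw [Finset.mem_range] at hj
  exact lp.single_apply_ne 2 j _ (by omega)

lemma elt_dense (z : Hsp) {ε : ℝ} (hε : 0 < ε) : ∃ l : List (ℚ × ℚ), ‖z - elt l‖ < ε := by
  have hs := (lp.hasSum_single (E := fun _ : ℕ => ℂ) (by norm_num) z).tendsto_sum_nat
  rw [Metric.tendsto_atTop] at hs
  obtain ⟨N, hN⟩ := hs (ε / 2) (by linarith)
  have hN' := hN N le_rfl
  rw [dist_eq_norm] at hN'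
  have hq : ∀ i : Fin N, ∃ q : ℚ × ℚ, ‖(z : ℕ → ℂ) i - cc q‖ < ε / (2 * (N + 1)) := by
    intro i
    exact cc_near _ (by positivity)
  choose q hq using hq
  refine ⟨List.ofFn q, ?_⟩
  have hlen : (List.ofFn q).length = N := List.length_ofFn
  have helt : elt (List.ofFn q)
      = ∑ i ∈ Finset.range N, lp.single 2 i (cc ((List.ofFn q).getD i (0, 0))) := by
    rw [elt, hlen]
  have hbound : ‖(∑ i ∈ Finset.range N, lp.single 2 i ((z : ℕ → ℂ) i)) - elt (List.ofFn q)‖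
      ≤ ∑ i ∈ Finset.range N, ‖(z : ℕ → ℂ) i - cc ((List.ofFn q).getD i (0, 0))‖ := by
    rw [helt, ← Finset.sum_sub_distrib]
    refine (norm_sum_le _ _).trans ?_
    refine Finset.sum_le_sum fun i _ => ?_
    rw [← single_sub']
    exact le_of_eq (lp.norm_single (E := fun _ : ℕ => ℂ) (by norm_num : (0:ℝ≥0∞) < 2) i ((z : ℕ → ℂ) i - cc ((List.ofFn q).getD i (0, 0))))
  have hsum : ∑ i ∈ Finset.range N, ‖(z : ℕ → ℂ) i - cc ((List.ofFn q).getD i (0, 0))‖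
      ≤ ε / 2 := by
    calc ∑ i ∈ Finset.range N, ‖(z : ℕ → ℂ) i - cc ((List.ofFn q).getD i (0, 0))‖
        ≤ ∑ _i ∈ Finset.range N, (ε / (2 * (N + 1))) := by
          refine Finset.sum_le_sum fun i hi => ?_
          rw [Finset.mem_range] at hi
          have hget : (List.ofFn q).getD i (0, 0) = q ⟨i, hi⟩ := by
            rw [List.getD_eq_getElem _ _ (by rw [hlen]; exact hi), List.getElem_ofFn]
          rw [hget]
          exact (hq ⟨i, hi⟩).le
      _ = N * (ε / (2 * (N + 1))) := by rw [Finset.sum_const, Finset.card_range, nsmul_eq_mul]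
      _ ≤ ε / 2 := by
          rw [← mul_div_assoc, div_le_div_iff₀ (by positivity) (by norm_num : (0:ℝ) < 2)]
          nlinarith [hε.le, Nat.cast_nonneg (α := ℝ) N]
  have hN2 : ‖z - ∑ i ∈ Finset.range N, lp.single 2 i ((z : ℕ → ℂ) i)‖ < ε / 2 := by
    rw [norm_sub_rev]
    exact hN'
  have tri := dist_triangle z (∑ i ∈ Finset.range N, lp.single 2 i ((z : ℕ → ℂ) i))
    (elt (List.ofFn q))
  rw [dist_eq_norm, dist_eq_norm, dist_eq_norm] at tri
  linarith

end RolewiczAux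

set_option maxHeartbeats 1000000 in
open RolewiczAux in
/-- (Rolewicz) For every `α ∈ ℂ` with `|α| > 1`, the operator `αT` on
`ℓ²(ℕ)`, where `T` is the backward shift, is hypercyclic: some `x₀` has a
dense orbit `{(αT)ᵏx₀ : k ∈ ℕ}`. -/
theorem stmt_15 (T : lp (fun _ : ℕ => ℂ) 2 →L[ℂ] lp (fun _ : ℕ => ℂ) 2)
    (hT : ∀ (x : lp (fun _ : ℕ => ℂ) 2) (n : ℕ), (T x) n = x (n + 1))
    (α : ℂ) (hα : 1 < ‖α‖) :
    ∃ x₀ : lp (fun _ : ℕ => ℂ) 2,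
      Dense (Set.range fun k : ℕ => ((α • T) ^ k) x₀) := by
  classical
  have hα0 : α ≠ 0 := by
    intro h
    rw [h] at hα
    simp at hα
    linarith
  have hb1 : ‖α⁻¹‖ < 1 := by
    rw [norm_inv]
    have h1 : 1 < ‖α‖ := by exact hα
    exact inv_lt_one_of_one_lt₀ h1
  have hb0 : (0:ℝ) ≤ ‖α⁻¹‖ := norm_nonneg _
  set b : ℝ := ‖α⁻¹‖ with hbdef
  let w : ℕ → List (ℚ × ℚ) := fun k => Denumerable.ofNat (List (ℚ × ℚ)) k.unpair.1
  let v : ℕ → Hsp := fun k => elt (w k)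
  have hv0 : ∀ (k i : ℕ), (w k).length ≤ i → (v k : ℕ → ℂ) i = 0 :=
    fun k i h => elt_apply_ge _ h
  have geo2 : ∀ c : ℕ, Summable (fun j : ℕ => (1/2:ℝ)^(j + c)) := by
    intro c
    have := (summable_geometric_of_lt_one (by norm_num : (0:ℝ) ≤ 1/2)
      (by norm_num : (1/2:ℝ) < 1)).mul_right ((1/2:ℝ)^c)
    simpa [pow_add] using this
  have gap : ∀ j : ℕ, ∃ mm : ℕ, (w j).length ≤ mm ∧ b ^ mm * ‖v (j+1)‖ ≤ (1/2:ℝ)^(j+1) := by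
    intro j
    have h0 : Filter.Tendsto (fun mm : ℕ => b ^ mm * ‖v (j+1)‖) Filter.atTop
        (nhds (0 * ‖v (j+1)‖)) :=
      (tendsto_pow_atTop_nhds_zero_of_lt_one hb0 hb1).mul_const _
    rw [zero_mul] at h0
    have h1 := h0.eventually_lt_const (by positivity : (0:ℝ) < (1/2:ℝ)^(j+1))
    rw [Filter.eventually_atTop] at h1
    obtain ⟨M, hM⟩ := h1
    exact ⟨max M (w j).length, le_max_right _ _, (hM _ (le_max_left _ _)).le⟩
  choose m hm1 hm2 using gap
  let n : ℕ → ℕ := fun j => Nat.rec 0 (fun i ni => ni + m i) j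
  have hnsucc : ∀ j, n (j+1) = n j + m j := fun j => rfl
  have hmono : Monotone n :=
    monotone_nat_of_le_succ (fun j => by rw [hnsucc]; exact Nat.le_add_right _ _)
  let term : ℕ → Hsp := fun j => (α⁻¹ ^ (n j)) • shiftL (n j) (v j)
  have hterm : ∀ j, term j = (α⁻¹ ^ (n j)) • shiftL (n j) (v j) := fun j => rfl
  have hnormterm : ∀ j, ‖term j‖ = b ^ (n j) * ‖v j‖ := by
    intro j
    rw [hterm, norm_smul, norm_pow, norm_shiftL]
  have hterm_le : ∀ j, ‖term (j+1)‖ ≤ (1/2:ℝ)^(j+1) := by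
    intro j
    rw [hnormterm (j+1)]
    refine le_trans ?_ (hm2 j)
    have h1 : b ^ (n (j+1)) ≤ b ^ (m j) :=
      pow_le_pow_of_le_one hb0 hb1.le (by rw [hnsucc]; omega)
    exact mul_le_mul_of_nonneg_right h1 (norm_nonneg _)
  have hsumnorm : Summable (fun j => ‖term j‖) := by
    refine (summable_nat_add_iff 1).mp ?_
    refine Summable.of_nonneg_of_le (fun _ => norm_nonneg _) (fun j => hterm_le j) ?_
    simpa using geo2 1
  have hsum : Summable term := hsumnorm.of_norm
  refine ⟨∑' j, term j, ?_⟩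
  have key_est : ∀ k : ℕ, ‖((α • T) ^ (n k)) (∑' j, term j) - v k‖ ≤ (1/2:ℝ)^k := by
    intro k
    have htail_eq : ∀ j : ℕ, ((α • T) ^ (n k)) (term (j + (k+1)))
        = (α⁻¹ ^ (n (j + (k+1)) - n k)) • shiftL (n (j + (k+1)) - n k) (v (j + (k+1))) := by
      intro j
      rw [hterm]
      exact key T hT hα0 (n k) (n (j + (k+1)))
        (hmono (show k ≤ j + (k+1) by omega)) (v (j + (k+1)))
    have htail_norm : ∀ j : ℕ, ‖((α • T) ^ (n k)) (term (j + (k+1)))‖ ≤ (1/2:ℝ)^(j + (k+1)) := by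
      intro j
      rw [htail_eq j, norm_smul, norm_pow, norm_shiftL]
      have e3 : j + (k+1) = (j + k) + 1 := by omega
      rw [e3]
      refine le_trans ?_ (hm2 (j + k))
      have h1 : m (j + k) ≤ n (j + (k+1)) - n k := by
        have e1 : n (j + (k+1)) = n (j + k) + m (j + k) :=
          (congrArg n (by omega : j + (k+1) = (j + k) + 1)).trans (hnsucc (j + k))
        have e2 : n k ≤ n (j + k) := hmono (show k ≤ j + k by omega)
        omega
      have h2 : b ^ (n (j + (k+1)) - n k) ≤ b ^ (m (j + k)) :=
        pow_le_pow_of_le_one hb0 hb1.le h1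
      exact mul_le_mul_of_nonneg_right h2 (norm_nonneg _)
    have hsumtail : Summable (fun j => term (j + (k+1))) := (summable_nat_add_iff (k+1)).mpr hsum
    have happ : ((α • T) ^ (n k)) (∑' j, term j)
        = ∑ j ∈ Finset.range (k+1), ((α • T) ^ (n k)) (term j)
          + ∑' j, ((α • T) ^ (n k)) (term (j + (k+1))) := by
      rw [← Summable.sum_add_tsum_nat_add (k+1) hsum, map_add, map_sum,
        ContinuousLinearMap.map_tsum _ hsumtail]
    have hfin : ∑ j ∈ Finset.range (k+1), ((α • T) ^ (n k)) (term j) = v k := by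
      rw [Finset.sum_range_succ]
      have hzero : ∑ j ∈ Finset.range k, ((α • T) ^ (n k)) (term j) = 0 := by
        refine Finset.sum_eq_zero fun j hj => ?_
        rw [Finset.mem_range] at hj
        have hle : n j ≤ n k := hmono (by omega)
        have hdecomp : (α • T) ^ (n k) = (α • T) ^ (n k - n j) * (α • T) ^ (n j) := by
          rw [← pow_add, Nat.sub_add_cancel hle]
        rw [hterm, hdecomp, ContinuousLinearMap.mul_apply, key' T hT hα0 (n j) (v j)]
        refine kill T hT (n k - n j) ((w j).length) ?_ (v j) (fun i hi => hv0 j i hi)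
        have e1 : n (j+1) = n j + m j := hnsucc j
        have e2 : n (j+1) ≤ n k := hmono (show j + 1 ≤ k by omega)
        have e3 := hm1 j
        omega
      rw [hzero, zero_add, hterm, key' T hT hα0 (n k) (v k)]
    rw [happ, hfin, add_sub_cancel_left]
    have hsummnormtail : Summable (fun j => ‖((α • T) ^ (n k)) (term (j + (k+1)))‖) :=
      Summable.of_nonneg_of_le (fun _ => norm_nonneg _) htail_norm (geo2 (k+1))
    calc ‖∑' j, ((α • T) ^ (n k)) (term (j + (k+1)))‖
        ≤ ∑' j, ‖((α • T) ^ (n k)) (term (j + (k+1)))‖ := norm_tsum_le_tsum_norm hsummnormtail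
      _ ≤ ∑' j : ℕ, (1/2:ℝ)^(j + (k+1)) := Summable.tsum_le_tsum htail_norm hsummnormtail (geo2 (k+1))
      _ = (1/2:ℝ)^k := by
          have hc : ∀ j : ℕ, (1/2:ℝ)^(j + (k+1)) = (1/2:ℝ)^j * (1/2:ℝ)^(k+1) :=
            fun j => pow_add _ _ _
          rw [tsum_congr hc, tsum_mul_right,
            tsum_geometric_of_lt_one (by norm_num) (by norm_num), pow_succ]
          norm_num
          ring
  refine Metric.denseRange_iff.mpr ?_
  intro z r hr
  obtain ⟨l, hl⟩ := elt_dense z (by linarith : (0:ℝ) < r/2)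
  obtain ⟨M, hM⟩ := exists_pow_lt_of_lt_one (by linarith : (0:ℝ) < r/2)
    (by norm_num : (1/2:ℝ) < 1)
  set k := Nat.pair (@Encodable.encode (List (ℚ × ℚ)) Denumerable.toEncodable l) M with hk
  have hvk : v k = elt l := by
    show elt (Denumerable.ofNat (List (ℚ × ℚ)) (Nat.unpair k).1) = elt l
    rw [hk, Nat.unpair_pair]
    show elt (Denumerable.ofNat (List (ℚ × ℚ))
      (@Encodable.encode (List (ℚ × ℚ)) Denumerable.toEncodable l)) = elt l
    exact congrArg elt (Denumerable.ofNat_encode l)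
  refine ⟨n k, ?_⟩
  have h1 := key_est k
  have h2 : (1/2:ℝ)^k ≤ (1/2:ℝ)^M :=
    pow_le_pow_of_le_one (by norm_num) (by norm_num) (Nat.right_le_pair _ _)
  have tri := dist_triangle z (v k) (((α • T) ^ (n k)) (∑' j, term j))
  rw [dist_eq_norm, dist_eq_norm, dist_eq_norm, norm_sub_rev (v k)] at tri
  rw [hvk] at h1 tri
  rw [dist_eq_norm]
  calc ‖z - ((α • T) ^ (n k)) (∑' j, term j)‖
      ≤ ‖z - elt l‖ + ‖((α • T) ^ (n k)) (∑' j, term j) - elt l‖ := tri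
    _ < r/2 + r/2 := add_lt_add_of_lt_of_le hl (h1.trans (h2.trans hM.le))
    _ = r := by ring
end RolewiczAux
end

section
/- (Herzog) For every irrational real number α, the rotation operator R on ℝ² given by the matrix with rows (cos 2πα, sin 2πα) and (−sin 2πα, cos 2πα) is supercyclic: there exists x₀ ∈ ℝ² such that the projective orbit {λ Rᵏ x₀ : k = 0, 1, 2, …; λ ∈ ℝ} is dense in ℝ². -/
open Real


lemma my_abs_cos_sub_cos_le (a b : ℝ) : |Real.cos a - Real.cos b| ≤ |a - b| := by
  rw [Real.cos_sub_cos, abs_mul, abs_mul]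
  have h1 : |Real.sin ((a + b) / 2)| ≤ 1 := Real.abs_sin_le_one _
  have h2 : |Real.sin ((a - b) / 2)| ≤ |(a - b) / 2| := Real.abs_sin_le_abs
  have h3 : |(a - b) / 2| = |a - b| / 2 := by rw [abs_div]; norm_num
  have h4 : |(-2 : ℝ)| = 2 := by norm_num
  rw [h4]
  nlinarith [abs_nonneg (Real.sin ((a - b) / 2)), abs_nonneg (Real.sin ((a + b) / 2)),
    abs_nonneg (a - b)]

lemma my_abs_sin_sub_sin_le (a b : ℝ) : |Real.sin a - Real.sin b| ≤ |a - b| := by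
  rw [Real.sin_sub_sin, abs_mul, abs_mul]
  have h1 : |Real.cos ((a + b) / 2)| ≤ 1 := Real.abs_cos_le_one _
  have h2 : |Real.sin ((a - b) / 2)| ≤ |(a - b) / 2| := Real.abs_sin_le_abs
  have h3 : |(a - b) / 2| = |a - b| / 2 := by rw [abs_div]; norm_num
  have h4 : |(2 : ℝ)| = 2 := by norm_num
  rw [h4]
  nlinarith [abs_nonneg (Real.sin ((a - b) / 2)), abs_nonneg (Real.cos ((a + b) / 2)),
    abs_nonneg (a - b)]


lemma my_rot_pow (θ : ℝ) (k : ℕ) :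
    (!![Real.cos θ, Real.sin θ; -Real.sin θ, Real.cos θ]) ^ k
      = !![Real.cos (k * θ), Real.sin (k * θ);
          -Real.sin (k * θ), Real.cos (k * θ)] := by
  induction k with
  | zero => simp [Matrix.one_fin_two]
  | succ n ih =>
    rw [pow_succ, ih, Matrix.mul_fin_two]
    have h : ((n : ℝ) + 1) * θ = n * θ + θ := by ring
    push_cast
    rw [h, Real.cos_add, Real.sin_add]
    congr 1 <;> ring

lemma my_rot_vec (θ : ℝ) (k : ℕ) :
    (!![Real.cos θ, Real.sin θ; -Real.sin θ, Real.cos θ] ^ k).mulVec ![1, 0]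
      = ![Real.cos (k * θ), -Real.sin (k * θ)] := by
  rw [my_rot_pow]
  funext i
  fin_cases i <;>
    simp [Matrix.mulVec, dotProduct, Fin.sum_univ_two]

lemma my_approx (g ε : ℝ) (hg : 0 < g) (hge : g < ε) (s : ℝ) (hs : 1 ≤ s) :
    ∃ j : ℕ, |(j : ℝ) * g - s| < ε := by
  refine ⟨(⌈s / g⌉).toNat, ?_⟩
  have h1 : (0:ℝ) < s / g := div_pos (by linarith) hg
  have h2 : (0:ℤ) ≤ ⌈s / g⌉ := by positivity
  have h3 : ((⌈s / g⌉).toNat : ℝ) = (⌈s / g⌉ : ℝ) := by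
    exact_mod_cast Int.toNat_of_nonneg h2
  rw [h3]
  have h4 : s ≤ (⌈s / g⌉ : ℝ) * g := (div_le_iff₀ hg).1 (Int.le_ceil _)
  have h5 : ((⌈s / g⌉ : ℝ) - 1) * g < s := by
    rw [← lt_div_iff₀ hg]
    linarith [Int.ceil_lt_add_one (s / g)]
  rw [abs_lt]
  constructor <;> nlinarith

/-- Density of `{kα + n : k ∈ ℕ, n ∈ ℤ}` for irrational `α`. -/
lemma my_dense (α : ℝ) (hα : Irrational α) (t ε : ℝ) (hε : 0 < ε) :
    ∃ (k : ℕ) (n : ℤ), |(k : ℝ) * α + n - t| < ε := by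
  set S := AddSubgroup.closure ({α, 1} : Set ℝ) with hS
  have hdense : Dense (S : Set ℝ) := by
    rcases S.dense_or_cyclic with h | ⟨a, ha⟩
    · exact h
    · exfalso
      have hαS : α ∈ S := AddSubgroup.subset_closure (by simp)
      have h1S : (1:ℝ) ∈ S := AddSubgroup.subset_closure (by simp)
      rw [ha, AddSubgroup.mem_closure_singleton] at hαS h1S
      obtain ⟨m, hm⟩ := hαS
      obtain ⟨n, hn⟩ := h1S
      have hn0 : n ≠ 0 := by rintro rfl; simp at hn
      refine hα ⟨(m : ℚ) / n, ?_⟩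
      have hnR : (n : ℝ) ≠ 0 := Int.cast_ne_zero.2 hn0
      have ha0 : a = 1 / (n : ℝ) := by
        field_simp
        rw [← hn]; push_cast [zsmul_eq_mul]; ring
      rw [← hm, ha0]
      push_cast [zsmul_eq_mul]
      field_simp
  have hne : Set.Nonempty (Set.Ioo (0:ℝ) (min ε 1)) :=
    Set.nonempty_Ioo.2 (lt_min hε one_pos)
  obtain ⟨g, hgS, hg⟩ := hdense.exists_mem_open isOpen_Ioo hne
  rw [SetLike.mem_coe, AddSubgroup.mem_closure_pair] at hgS
  obtain ⟨m, n, hmn⟩ := hgS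
  simp only [zsmul_eq_mul, mul_one] at hmn
  have hg0 : 0 < g := hg.1
  have hgε : g < ε := lt_of_lt_of_le hg.2 (min_le_left _ _)
  have hg1 : g < 1 := lt_of_lt_of_le hg.2 (min_le_right _ _)
  have hm0 : m ≠ 0 := by
    rintro rfl
    rw [Int.cast_zero, zero_mul, zero_add] at hmn
    have h1 : (0:ℝ) < (n:ℝ) := hmn ▸ hg0
    have h2 : (n:ℝ) < 1 := hmn ▸ hg1
    have h1' : (0:ℤ) < n := by exact_mod_cast h1
    have h2' : n < 1 := by exact_mod_cast h2
    omega
  rcases hm0.lt_or_gt with hneg | hpos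
  · -- m < 0
    obtain ⟨j, hj⟩ := my_approx g ε hg0 hgε (((⌊t⌋ : ℝ) + 2) - t)
      (by linarith [Int.lt_floor_add_one t])
    refine ⟨j * (-m).toNat, -(j : ℤ) * n + (⌊t⌋ + 2), ?_⟩
    have hmc : (((-m).toNat : ℝ)) = -(m : ℝ) := by
      have : ((-m).toNat : ℤ) = -m := Int.toNat_of_nonneg (by omega)
      exact_mod_cast this
    push_cast [hmc]
    rw [show (j:ℝ) * -(m:ℝ) * α + (-(j:ℝ) * (n:ℝ) + ((⌊t⌋:ℝ) + 2)) - t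
        = -((j:ℝ) * g - (((⌊t⌋:ℝ) + 2) - t)) by rw [← hmn]; ring]
    rw [abs_neg]
    exact hj
  · -- m > 0
    obtain ⟨j, hj⟩ := my_approx g ε hg0 hgε (t - ((⌊t⌋ : ℝ) - 1))
      (by linarith [Int.floor_le t])
    refine ⟨j * m.toNat, (j : ℤ) * n + (⌊t⌋ - 1), ?_⟩
    have hmc : ((m.toNat : ℝ)) = (m : ℝ) := by
      have : (m.toNat : ℤ) = m := Int.toNat_of_nonneg (by omega)
      exact_mod_cast this
    push_cast [hmc]
    rw [show (j:ℝ) * (m:ℝ) * α + ((j:ℝ) * (n:ℝ) + ((⌊t⌋:ℝ) - 1)) - t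
        = (j:ℝ) * g - (t - ((⌊t⌋:ℝ) - 1)) by rw [← hmn]; ring]
    exact hj


/-- (Herzog) For every irrational `α`, the rotation of `ℝ²` by angle `2πα` is
supercyclic: there is `x₀ ∈ ℝ²` whose projective orbit
`{λ Rᵏ x₀ : k ∈ ℕ, λ ∈ ℝ}` is dense in `ℝ²`. -/
theorem stmt_16 (α : ℝ) (hα : Irrational α) :
    ∃ x₀ : Fin 2 → ℝ,
      Dense {y : Fin 2 → ℝ | ∃ (k : ℕ) (l : ℝ),
        y = l • ((!![Real.cos (2 * Real.pi * α), Real.sin (2 * Real.pi * α);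
            -Real.sin (2 * Real.pi * α), Real.cos (2 * Real.pi * α)] ^ k).mulVec x₀)} := by
  refine ⟨![1, 0], ?_⟩
  rw [Metric.dense_iff]
  intro y r hr
  by_cases hy : y = 0
  · refine ⟨y, Metric.mem_ball_self hr, 0, 0, ?_⟩
    rw [hy, zero_smul]
  · set θ : ℝ := 2 * π * α with hθ
    set z : ℂ := ⟨y 0, -(y 1)⟩ with hz
    have hz0 : z ≠ 0 := by
      intro h
      apply hy
      rw [Complex.ext_iff] at h
      simp only [Complex.zero_re, Complex.zero_im] at h
      funext i
      fin_cases i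
      · exact h.1
      · simpa [hz] using h.2
    set R := ‖z‖ with hR
    have hR0 : 0 < R := norm_pos_iff.mpr hz0
    set φ := z.arg with hφ
    have hcos : R * Real.cos φ = y 0 := Complex.norm_mul_cos_arg z
    have hsin : R * Real.sin φ = -(y 1) := Complex.norm_mul_sin_arg z
    have h2π : (0:ℝ) < 2 * π := by positivity
    have hδ : 0 < r / ((R + 1) * (2 * π)) := by positivity
    obtain ⟨k, n, hkn⟩ := my_dense α hα (φ / (2 * π)) _ hδ
    have hball : ∀ a b : ℝ, |a - b| ≤ |(k : ℝ) * θ + n * (2 * π) - φ| →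
        |R * a - R * b| < r → True := fun _ _ _ _ => trivial
    -- the key angular estimate
    have hang : |(k : ℝ) * θ + n * (2 * π) - φ| < r / (R + 1) := by
      have : (k : ℝ) * θ + n * (2 * π) - φ = (2 * π) * ((k : ℝ) * α + n - φ / (2 * π)) := by
        rw [hθ]; field_simp
      rw [this, abs_mul, abs_of_pos h2π]
      calc 2 * π * |(k : ℝ) * α + n - φ / (2 * π)|
          < 2 * π * (r / ((R + 1) * (2 * π))) := by
            exact mul_lt_mul_of_pos_left hkn h2π
        _ = r / (R + 1) := by field_simp
    refine ⟨R • ![Real.cos (k * θ), -Real.sin (k * θ)], ?_, k, R, ?_⟩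
    · rw [Metric.mem_ball, dist_pi_lt_iff hr]
      intro i
      have hcosb : |Real.cos ((k : ℝ) * θ) - Real.cos φ| < r / (R + 1) := by
        calc |Real.cos ((k : ℝ) * θ) - Real.cos φ|
            = |Real.cos ((k : ℝ) * θ + n * (2 * π)) - Real.cos φ| := by
              rw [Real.cos_add_int_mul_two_pi]
          _ ≤ |(k : ℝ) * θ + n * (2 * π) - φ| := my_abs_cos_sub_cos_le _ _
          _ < r / (R + 1) := hang
      have hsinb : |Real.sin ((k : ℝ) * θ) - Real.sin φ| < r / (R + 1) := by
        calc |Real.sin ((k : ℝ) * θ) - Real.sin φ|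
            = |Real.sin ((k : ℝ) * θ + n * (2 * π)) - Real.sin φ| := by
              rw [Real.sin_add_int_mul_two_pi]
          _ ≤ |(k : ℝ) * θ + n * (2 * π) - φ| := my_abs_sin_sub_sin_le _ _
          _ < r / (R + 1) := hang
      have hfrac : R * (r / (R + 1)) < r := by
        rw [mul_div_assoc'] at *
        rw [div_lt_iff₀ (by linarith)]
        nlinarith
      fin_cases i
      · show dist (R * Real.cos ((k:ℝ) * θ)) (y 0) < r
        rw [Real.dist_eq, ← hcos, ← mul_sub, abs_mul, abs_of_pos hR0]
        calc R * |Real.cos ((k:ℝ) * θ) - Real.cos φ| < R * (r / (R + 1)) :=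
              mul_lt_mul_of_pos_left hcosb hR0
          _ < r := hfrac
      · show dist (R * -Real.sin ((k:ℝ) * θ)) (y 1) < r
        have hy1 : y 1 = R * -Real.sin φ := by linarith [hsin]
        rw [Real.dist_eq, hy1, ← mul_sub, abs_mul, abs_of_pos hR0]
        have : |-Real.sin ((k:ℝ) * θ) - -Real.sin φ|
            = |Real.sin ((k:ℝ) * θ) - Real.sin φ| := by
          rw [← abs_neg]; ring_nf
        rw [this]
        calc R * |Real.sin ((k:ℝ) * θ) - Real.sin φ| < R * (r / (R + 1)) :=
              mul_lt_mul_of_pos_left hsinb hR0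
          _ < r := hfrac
    · rw [my_rot_vec]
end

section
/- (Bart et al.) If P₁, …, P_k are idempotent n × n complex matrices (Pⱼ² = Pⱼ for each j) such that P₁ + ⋯ + P_k = 0, then Pⱼ = 0 for every j = 1, …, k. -/
/-- (Bart et al.) If `P₁, …, P_k` are idempotent `n × n` complex matrices
with `P₁ + ⋯ + P_k = 0`, then every `Pⱼ = 0`. -/
theorem stmt_17 (n k : ℕ) (P : Fin k → Matrix (Fin n) (Fin n) ℂ)
    (hidem : ∀ j, P j ^ 2 = P j) (hsum : ∑ j, P j = 0) :
    ∀ j, P j = 0 := by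
  -- pass to linear maps
  set f : Fin k → ((Fin n → ℂ) →ₗ[ℂ] (Fin n → ℂ)) := fun j => Matrix.toLin' (P j) with hf
  have hfidem : ∀ j, f j ∘ₗ f j = f j := by
    intro j
    simp only [hf, ← Matrix.toLin'_mul, ← pow_two, hidem j]
  -- each f j is a projection onto some submodule
  have hproj : ∀ j, ∃ p : Submodule ℂ (Fin n → ℂ), LinearMap.IsProj p (f j) := by
    intro j
    exact (LinearMap.isProj_iff_isIdempotentElem (f j)).mpr (hfidem j)
  choose p hp using hproj
  -- trace of each f j is finrank of p j
  have htr : ∀ j, LinearMap.trace ℂ (Fin n → ℂ) (f j) = (Module.finrank ℂ (p j) : ℂ) :=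
    fun j => (hp j).trace
  -- sum of traces is 0
  have hsum' : ∑ j, LinearMap.trace ℂ (Fin n → ℂ) (f j) = 0 := by
    rw [← map_sum]
    have : ∑ j, f j = 0 := by
      simp only [hf, ← map_sum, hsum, map_zero]
    rw [this, map_zero]
  have hnat : ∑ j, (Module.finrank ℂ (p j) : ℂ) = 0 := by
    rw [← hsum']; exact Finset.sum_congr rfl fun j _ => (htr j).symm
  have hnat' : (↑(∑ j, Module.finrank ℂ (p j)) : ℂ) = 0 := by push_cast; exact hnat
  have hzero : ∑ j, Module.finrank ℂ (p j) = 0 := by exact_mod_cast hnat'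
  intro j
  have hrank0 : Module.finrank ℂ (p j) = 0 :=
    Finset.sum_eq_zero_iff.mp hzero j (Finset.mem_univ j)
  have hpbot : p j = ⊥ := Submodule.finrank_eq_zero.mp hrank0
  have hf0 : f j = 0 := by
    apply LinearMap.ext
    intro x
    have hm : f j x ∈ p j := (hp j).map_mem x
    rw [hpbot, Submodule.mem_bot] at hm
    simp [hm]
  have h2 : Matrix.toLin' (P j) = Matrix.toLin' (0 : Matrix (Fin n) (Fin n) ℂ) := by
    rw [show Matrix.toLin' (P j) = f j from rfl, hf0, map_zero]
  exact Matrix.toLin'.injective h2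
end
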